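/- Let p be an odd prime, m ≥ 1, and let {A_1,…,A_L} be m×m matrices over F_p such that for all i ≠ j, rank((A_i - A_j) + (A_i - A_j)ᵀ) ≥ r over F_p. Let Φ be the collection of L·p^m unit vectors in C^{p^m} given by x ↦ p^{-m/2} ω^{x A_i xᵀ + c·x} for i ∈ {1,…,L} and c ∈ F_p^m. Then the coherence of Φ is at most p^{-r/2}. -/

import Mathlib

open scoped BigOperators Matrix

noncomputable def omegaP (p : ℕ) : ℂ := Complex.exp (2 * Real.pi * Complex.I / p)

/-- The normalized spreading column corresponding to the quadratic matrix `A`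
and the linear shift `c`: `x ↦ p^{-m/2} ω^{x A xᵀ + c·x}`. -/
noncomputable def col (p m : ℕ) (A : Matrix (Fin m) (Fin m) (ZMod p))
    (c : Fin m → ZMod p) : (Fin m → ZMod p) → ℂ :=
  fun x => omegaP p ^ ((x ⬝ᵥ A.mulVec x) + c ⬝ᵥ x).val /
    (Real.sqrt ((p : ℝ) ^ m) : ℂ)

noncomputable def eP (p : ℕ) (t : ZMod p) : ℂ := omegaP p ^ t.val

section Aux

variable {p : ℕ} [Fact p.Prime]

lemma omegaP_prim : IsPrimitiveRoot (omegaP p) p := by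
  simpa [omegaP] using Complex.isPrimitiveRoot_exp p (Fact.out (p := p.Prime)).ne_zero

lemma eP_natCast (n : ℕ) : eP p (n : ZMod p) = omegaP p ^ n := by
  have h1 : omegaP p ^ p = 1 := (omegaP_prim (p := p)).pow_eq_one
  rw [eP, ZMod.val_natCast]
  conv_rhs => rw [← Nat.div_add_mod n p, pow_add, pow_mul, h1, one_pow, one_mul]

lemma eP_add (a b : ZMod p) : eP p (a + b) = eP p a * eP p b := by
  have := eP_natCast (p := p) (a.val + b.val)
  rw [Nat.cast_add, ZMod.natCast_val, ZMod.natCast_val, ZMod.cast_id, ZMod.cast_id] at this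
  rw [this, pow_add, eP, eP]

lemma eP_zero : eP p 0 = 1 := by simp [eP, ZMod.val_zero]

lemma omegaP_abs : ‖omegaP p‖ = 1 := by
  rw [omegaP, Complex.norm_exp]
  norm_num [div_eq_mul_inv, Complex.mul_re, Complex.mul_I_re]

lemma eP_abs (a : ZMod p) : ‖eP p a‖ = 1 := by
  rw [eP, norm_pow, omegaP_abs, one_pow]

lemma eP_conj (a : ZMod p) : (starRingEnd ℂ) (eP p a) = eP p (-a) := by
  have h : eP p a * eP p (-a) = 1 := by rw [← eP_add, add_neg_cancel, eP_zero]
  have : (starRingEnd ℂ) (eP p a) = (eP p a)⁻¹ := (Complex.inv_eq_conj (eP_abs a)).symm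
  rw [this, inv_eq_of_mul_eq_one_right h]

lemma eP_sub (a b : ZMod p) : eP p a * (starRingEnd ℂ) (eP p b) = eP p (a - b) := by
  rw [eP_conj, ← eP_add, sub_eq_add_neg]

lemma eP_sum_univ : ∑ x : ZMod p, eP p x = 0 := by
  have hp : 1 < p := (Fact.out (p := p.Prime)).one_lt
  have h := (omegaP_prim (p := p)).geom_sum_eq_zero hp
  rw [← h]
  refine Finset.sum_bij (fun (x : ZMod p) _ => x.val) ?_ ?_ ?_ ?_
  · intro x _; exact Finset.mem_range.2 (ZMod.val_lt x)
  · intro a _ b _ h2; exact ZMod.val_injective p h2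
  · intro b hb
    exact ⟨(b : ZMod p), Finset.mem_univ _, ZMod.val_natCast_of_lt (Finset.mem_range.1 hb)⟩
  · intro x _; rfl

lemma eP_sum_mul (a : ZMod p) : ∑ x : ZMod p, eP p (a * x) = if a = 0 then (p : ℂ) else 0 := by
  split_ifs with h
  · subst h; simp [eP, ZMod.val_zero, ZMod.card]
  · rw [← eP_sum_univ (p := p)]
    exact Fintype.sum_bijective (fun x => a * x) (mulLeft_bijective₀ a h) _ _ (fun x => rfl)

lemma eP_sum_fin {m : ℕ} (a : Fin m → ZMod p) :
    ∑ x : Fin m → ZMod p, eP p (a ⬝ᵥ x) = if a = 0 then ((p : ℂ) ^ m) else 0 := by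
  have hprod : ∀ x : Fin m → ZMod p, eP p (a ⬝ᵥ x) = ∏ k, eP p (a k * x k) := by
    intro x
    rw [dotProduct]
    induction (Finset.univ : Finset (Fin m)) using Finset.cons_induction with
    | empty => simp [eP, ZMod.val_zero]
    | cons k s hk ih => rw [Finset.sum_cons, eP_add, ih, Finset.prod_cons]
  simp_rw [hprod]
  rw [← Fintype.prod_sum (fun k t => eP p (a k * t))]
  simp_rw [eP_sum_mul]
  split_ifs with h
  · subst h; simp
  · obtain ⟨k, hk⟩ := Function.ne_iff.1 h
    refine Finset.prod_eq_zero (Finset.mem_univ k) (if_neg (by simpa using hk))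

lemma card_ker_eq {m : ℕ} (M : Matrix (Fin m) (Fin m) (ZMod p)) :
    Fintype.card {h : Fin m → ZMod p // M.mulVec h = 0} = p ^ (m - M.rank) := by
  have hker : ∀ h : Fin m → ZMod p, M.mulVec h = 0 ↔ h ∈ LinearMap.ker M.mulVecLin := by
    intro h; rw [LinearMap.mem_ker, Matrix.mulVecLin_apply]
  have e : {h : Fin m → ZMod p // M.mulVec h = 0} ≃ LinearMap.ker M.mulVecLin :=
    Equiv.subtypeEquiv (Equiv.refl _) (by intro h; simpa using hker h)
  have : Fintype (LinearMap.ker M.mulVecLin) := Fintype.ofFinite _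
  rw [Fintype.card_congr e]
  have hcard := Module.card_eq_pow_finrank (K := ZMod p) (V := LinearMap.ker M.mulVecLin)
  rw [hcard, ZMod.card]
  congr 1
  have hrn := LinearMap.finrank_range_add_finrank_ker (M.mulVecLin)
  rw [Module.finrank_pi] at hrn
  rw [Fintype.card_fin] at hrn
  have hrank : M.rank = Module.finrank (ZMod p) (LinearMap.range M.mulVecLin) := rfl
  omega

lemma sq_bound {m : ℕ} (B : Matrix (Fin m) (Fin m) (ZMod p)) (d : Fin m → ZMod p) :
    ‖∑ x : Fin m → ZMod p, eP p (x ⬝ᵥ B.mulVec x + d ⬝ᵥ x)‖ ^ 2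
      ≤ (p:ℝ)^m * (p:ℝ)^(m - (B + Bᵀ).rank) := by
  set M := B + Bᵀ with hM
  set q : (Fin m → ZMod p) → ZMod p := fun x => x ⬝ᵥ B.mulVec x + d ⬝ᵥ x with hq
  set S := ∑ x : Fin m → ZMod p, eP p (q x) with hS
  have key : ∀ y h : Fin m → ZMod p, q (y + h) - q y = y ⬝ᵥ M.mulVec h + q h := by
    intro y h
    have hc : h ⬝ᵥ B.mulVec y = y ⬝ᵥ Bᵀ.mulVec h := by
      rw [Matrix.dotProduct_mulVec, ← Matrix.mulVec_transpose, dotProduct_comm]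
    simp only [hq, hM, Matrix.mulVec_add, Matrix.add_mulVec, dotProduct_add,
      add_dotProduct] at *
    rw [hc]; ring
  have h1 : S * (starRingEnd ℂ) S
      = ∑ h : Fin m → ZMod p, (if M.mulVec h = 0 then ((p:ℂ)^m) else 0) * eP p (q h) := by
    rw [hS, map_sum, Finset.sum_mul_sum]
    rw [Finset.sum_comm]
    calc ∑ y : Fin m → ZMod p, ∑ x : Fin m → ZMod p, eP p (q x) * (starRingEnd ℂ) (eP p (q y))
        = ∑ y : Fin m → ZMod p, ∑ h : Fin m → ZMod p, eP p (y ⬝ᵥ M.mulVec h) * eP p (q h) := by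
          refine Finset.sum_congr rfl fun y _ => ?_
          refine (Fintype.sum_equiv (Equiv.addLeft y) _ _ fun h => ?_).symm
          rw [eP_sub]
          simp only [Equiv.coe_addLeft]
          rw [key y h]
          exact (eP_add _ _).symm
      _ = ∑ h : Fin m → ZMod p, (∑ y : Fin m → ZMod p, eP p ((M.mulVec h) ⬝ᵥ y)) * eP p (q h) := by
          rw [Finset.sum_comm]
          refine Finset.sum_congr rfl fun h _ => ?_
          rw [Finset.sum_mul]
          refine Finset.sum_congr rfl fun y _ => ?_
          rw [dotProduct_comm]
      _ = _ := by
          refine Finset.sum_congr rfl fun h _ => ?_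
          rw [eP_sum_fin]
  have h2 : ‖S‖ ^ 2 = ‖S * (starRingEnd ℂ) S‖ := by
    rw [norm_mul, Complex.norm_conj, sq]
  rw [h2, h1]
  calc ‖∑ h : Fin m → ZMod p, (if M.mulVec h = 0 then ((p:ℂ)^m) else 0) * eP p (q h)‖
      ≤ ∑ h : Fin m → ZMod p,
          ‖(if M.mulVec h = 0 then ((p:ℂ)^m) else 0) * eP p (q h)‖ :=
        norm_sum_le _ _
    _ = ∑ h : Fin m → ZMod p, (if M.mulVec h = 0 then ((p:ℝ)^m) else 0) := by
        refine Finset.sum_congr rfl fun h _ => ?_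
        rw [norm_mul, eP_abs, mul_one]
        split_ifs <;> simp
    _ = (Finset.univ.filter (fun h : Fin m → ZMod p => M.mulVec h = 0)).card • ((p:ℝ)^m) := by
        rw [Finset.sum_ite, Finset.sum_const, Finset.sum_const_zero, add_zero]
    _ ≤ (p:ℝ)^m * (p:ℝ)^(m - M.rank) := by
        rw [← Fintype.card_subtype, card_ker_eq, nsmul_eq_mul, mul_comm]
        push_cast
        exact le_rfl

end Aux

theorem stmt16 (p m L r : ℕ) [Fact p.Prime] (hodd : Odd p) (hm : 0 < m)
    (A : Fin L → Matrix (Fin m) (Fin m) (ZMod p))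
    (hA : ∀ i j : Fin L, i ≠ j → r ≤ ((A i - A j) + (A i - A j)ᵀ).rank)
    (i j : Fin L) (c c' : Fin m → ZMod p) (hij : (i, c) ≠ (j, c')) :
    ‖(∑ x : Fin m → ZMod p,
        col p m (A i) c x * (starRingEnd ℂ) (col p m (A j) c' x))‖
      ≤ (Real.sqrt ((p : ℝ) ^ r))⁻¹ := by
  have hp0 : (0:ℝ) < p := by exact_mod_cast (Fact.out (p := p.Prime)).pos
  set B := A i - A j with hB
  set d := c - c' with hd
  set S := ∑ x : Fin m → ZMod p, eP p (x ⬝ᵥ B.mulVec x + d ⬝ᵥ x) with hS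
  -- rewrite the sum as S / p^m
  have hsum : ∑ x : Fin m → ZMod p,
      col p m (A i) c x * (starRingEnd ℂ) (col p m (A j) c' x) = S / ((p:ℂ)^m) := by
    rw [hS, Finset.sum_div]
    refine Finset.sum_congr rfl fun x _ => ?_
    have hss : ((Real.sqrt ((p : ℝ) ^ m) : ℂ)) * ((Real.sqrt ((p : ℝ) ^ m) : ℂ)) = ((p:ℂ)^m) := by
      rw [← Complex.ofReal_mul, Real.mul_self_sqrt (pow_nonneg hp0.le m)]
      push_cast
      ring
    have hqd : (x ⬝ᵥ (A i).mulVec x + c ⬝ᵥ x) - (x ⬝ᵥ (A j).mulVec x + c' ⬝ᵥ x)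
        = x ⬝ᵥ B.mulVec x + d ⬝ᵥ x := by
      rw [hB, hd]
      simp only [Matrix.sub_mulVec, dotProduct_sub, sub_dotProduct]
      ring
    calc col p m (A i) c x * (starRingEnd ℂ) (col p m (A j) c' x)
        = (eP p (x ⬝ᵥ (A i).mulVec x + c ⬝ᵥ x) *
            (starRingEnd ℂ) (eP p (x ⬝ᵥ (A j).mulVec x + c' ⬝ᵥ x))) /
            (((Real.sqrt ((p : ℝ) ^ m) : ℂ)) * ((Real.sqrt ((p : ℝ) ^ m) : ℂ))) := by
          rw [col, col, map_div₀, Complex.conj_ofReal, div_mul_div_comm]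
          rfl
      _ = eP p (x ⬝ᵥ B.mulVec x + d ⬝ᵥ x) / ((p:ℂ)^m) := by
          rw [hss, eP_sub, hqd]
  rw [hsum, norm_div, norm_pow, Complex.norm_natCast]
  by_cases hij' : i = j
  · -- then c ≠ c', and the quadratic part vanishes
    have hd0 : d ≠ 0 := by
      rw [hd, sub_ne_zero]
      intro hcc
      exact hij (by rw [hij', hcc])
    have hB0 : B = 0 := by rw [hB, hij', sub_self]
    have : S = 0 := by
      rw [hS, hB0]
      simp only [Matrix.zero_mulVec, dotProduct_zero, zero_add]
      rw [eP_sum_fin, if_neg hd0]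
    rw [this, norm_zero, zero_div]
    positivity
  · have hrk : r ≤ (B + Bᵀ).rank := hA i j hij'
    have hkm : (B + Bᵀ).rank ≤ m := Matrix.rank_le_width _
    have hrm : r ≤ m := hrk.trans hkm
    have hsq : ‖S‖ ^ 2 ≤ (p:ℝ)^m * (p:ℝ)^(m - r) := by
      refine (sq_bound B d).trans ?_
      have : (p:ℝ)^(m - (B + Bᵀ).rank) ≤ (p:ℝ)^(m - r) :=
        pow_le_pow_right₀ (by exact_mod_cast (Fact.out (p := p.Prime)).one_lt.le)
          (Nat.sub_le_sub_left hrk m)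
      exact mul_le_mul_of_nonneg_left this (by positivity)
    have hRHS : ((Real.sqrt ((p:ℝ)^r))⁻¹ * (p:ℝ)^m) ^ 2 = (p:ℝ)^m * (p:ℝ)^(m - r) := by
      rw [mul_pow, inv_pow, Real.sq_sqrt (by positivity)]
      rw [eq_comm, inv_mul_eq_div, eq_div_iff (by positivity)]
      rw [← pow_add, ← pow_mul, ← pow_add]
      congr 1
      omega
    have habs : ‖S‖ ≤ (Real.sqrt ((p:ℝ)^r))⁻¹ * (p:ℝ)^m := by
      have h1 : ‖S‖ = Real.sqrt (‖S‖ ^ 2) :=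
        (Real.sqrt_sq (norm_nonneg _)).symm
      rw [h1]
      calc Real.sqrt (‖S‖ ^ 2) ≤ Real.sqrt ((p:ℝ)^m * (p:ℝ)^(m - r)) :=
            Real.sqrt_le_sqrt hsq
        _ = (Real.sqrt ((p:ℝ)^r))⁻¹ * (p:ℝ)^m := by
            rw [← hRHS, Real.sqrt_sq (by positivity)]
    rw [div_le_iff₀ (by positivity)]
    exact habs
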